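/- Let (X, τ) be a two-sided symbolic dynamical system and (X, θ, F(𝔞)) its associated discrete partial dynamical system. If g ∈ F(𝔞) and D_g ≠ ∅, then either g ∈ 𝔞* or g⁻¹ ∈ 𝔞* (i.e., g or its inverse lies in the positive cone of the free group). -/

import Mathlib

variable {𝔞 : Type*}

/-- The two-sided shift `τ : 𝔞^ℤ → 𝔞^ℤ`, `(τ z)_m = z_{m+1}`. -/
def tshift (z : ℤ → 𝔞) : ℤ → 𝔞 := fun n => z (n + 1)

/-- The inverse shift `τ⁻¹`. -/
def tshiftInv (z : ℤ → 𝔞) : ℤ → 𝔞 := fun n => z (n - 1)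

/-- The elementary map for a letter `(a, true)` (i.e. `θ_a = τ⁻¹` restricted to
`D_{a⁻¹}`) or `(a, false)` (i.e. `θ_{a⁻¹} = τ` restricted to `D_a`). -/
def tletterMap (b : 𝔞 × Bool) : (ℤ → 𝔞) → ℤ → 𝔞 :=
  if b.2 then tshiftInv else tshift

/-- The domain of the elementary map for a letter: `θ_a` has domain
`D_{a⁻¹} = {z ∈ X : z_{-1} = a}`, and `θ_{a⁻¹}` has domain
`D_a = {z ∈ X : z_0 = a}`. -/
def tletterDom (X : Set (ℤ → 𝔞)) (b : 𝔞 × Bool) : Set (ℤ → 𝔞) :=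
  if b.2 then {z ∈ X | z (-1) = b.1} else {z ∈ X | z 0 = b.1}

/-- `θ_{b₁} ∘ θ_{b₂} ∘ ⋯ ∘ θ_{b_k}` for a word `w = b₁b₂⋯b_k`, as a total map. -/
def twordMap (w : List (𝔞 × Bool)) : (ℤ → 𝔞) → ℤ → 𝔞 :=
  w.foldr (fun b f => tletterMap b ∘ f) id

/-- `θ_{b₁}(θ_{b₂}(⋯ θ_{b_k}(X)⋯))` for a word `w = b₁b₂⋯b_k`. -/
def twordDom (X : Set (ℤ → 𝔞)) (w : List (𝔞 × Bool)) : Set (ℤ → 𝔞) :=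
  w.foldr (fun b S => tletterMap b '' (tletterDom X b ∩ S)) X

variable [DecidableEq 𝔞]

/-- The domain `D_g` for `g` in the free group, via its reduced word. -/
def tD (X : Set (ℤ → 𝔞)) (g : FreeGroup 𝔞) : Set (ℤ → 𝔞) :=
  twordDom X g.toWord

/-- The partial map `θ_g` for `g` in the free group, via its reduced word. -/
def tMap (g : FreeGroup 𝔞) : (ℤ → 𝔞) → ℤ → 𝔞 :=
  twordMap g.toWord

/-- The embedding of finite words into the free group (the positive cone). -/
def embWord (μ : List 𝔞) : FreeGroup 𝔞 :=
  FreeGroup.mk (μ.map fun a => (a, true))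

lemma twordDom_cons (X : Set (ℤ → 𝔞)) (b : 𝔞 × Bool) (w : List (𝔞 × Bool)) :
    twordDom X (b :: w) = tletterMap b '' (tletterDom X b ∩ twordDom X w) := rfl

lemma mem_twordDom_cons {X : Set (ℤ → 𝔞)} {b : 𝔞 × Bool} {w : List (𝔞 × Bool)}
    {z : ℤ → 𝔞} (hz : z ∈ twordDom X (b :: w)) :
    if b.2 then z 0 = b.1 else z (-1) = b.1 := by
  rw [twordDom_cons] at hz
  obtain ⟨y, ⟨hy1, _⟩, rfl⟩ := hz
  obtain ⟨a, c⟩ := b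
  cases c <;> simp only [tletterMap, tletterDom, tshift, tshiftInv] at hy1 ⊢ <;>
    simpa [tshift, tshiftInv] using hy1.2

lemma twordDom_tail_nonempty {X : Set (ℤ → 𝔞)} {b : 𝔞 × Bool} {w : List (𝔞 × Bool)}
    (h : (twordDom X (b :: w)).Nonempty) : (twordDom X w).Nonempty := by
  rw [twordDom_cons] at h
  obtain ⟨z, y, ⟨_, hy2⟩, _⟩ := h
  exact ⟨y, hy2⟩

/-- For a word with no adjacent cancelling pair whose domain is nonempty, all letters
have the same sign. -/
lemma key_lemma (X : Set (ℤ → 𝔞)) :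
    ∀ w : List (𝔞 × Bool),
      (∀ (L₁ : List (𝔞 × Bool)) (x : 𝔞) (b : Bool) (L₂ : List (𝔞 × Bool)),
        w ≠ L₁ ++ (x, b) :: (x, !b) :: L₂) →
      (twordDom X w).Nonempty →
      (∀ b ∈ w, b.2 = true) ∨ (∀ b ∈ w, b.2 = false) := by
  intro w
  induction w with
  | nil => intro _ _; left; simp
  | cons b w ih =>
    intro hred hne
    have hred' : ∀ (L₁ : List (𝔞 × Bool)) (x : 𝔞) (c : Bool) (L₂ : List (𝔞 × Bool)),
        w ≠ L₁ ++ (x, c) :: (x, !c) :: L₂ := by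
      intro L₁ x c L₂ h
      exact hred (b :: L₁) x c L₂ (by simp [h])
    have htail := ih hred' (twordDom_tail_nonempty hne)
    cases w with
    | nil =>
      cases hb : b.2
      · right; intro c hc; simp at hc; subst hc; exact hb
      · left; intro c hc; simp at hc; subst hc; exact hb
    | cons b₂ rest =>
      -- if signs of b and b₂ differ, derive a contradiction
      by_cases hbb : b.2 = b₂.2
      · cases htail with
        | inl h =>
          left; intro c hc
          rcases List.mem_cons.1 hc with rfl | hc
          · rw [hbb]; exact h b₂ (by simp)
          · exact h c hc
        | inr h =>
          right; intro c hc
          rcases List.mem_cons.1 hc with rfl | hc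
          · rw [hbb]; exact h b₂ (by simp)
          · exact h c hc
      · exfalso
        obtain ⟨z, hz⟩ := hne
        rw [twordDom_cons] at hz
        obtain ⟨y, ⟨hy1, hy2⟩, _⟩ := hz
        have h2 := mem_twordDom_cons hy2
        unfold tletterDom at hy1
        have heq : b.1 = b₂.1 := by
          cases hb : b.2 <;> cases hb2 : b₂.2 <;>
            rw [hb, hb2] at hbb <;> try simp at hbb
          · rw [hb] at hy1; rw [hb2] at h2
            simp only [if_false, if_true] at hy1 h2
            rw [← hy1.2, h2]
          · rw [hb] at hy1; rw [hb2] at h2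
            simp only [if_false, if_true] at hy1 h2
            rw [← hy1.2, h2]
        have hnotb : b.2 = !b₂.2 := by
          cases hb : b.2 <;> cases hb2 : b₂.2 <;> rw [hb, hb2] at hbb <;> simp at hbb ⊢
        exact hred [] b.1 b.2 rest (by
          have hb2 : b₂ = (b.1, !b.2) := by
            obtain ⟨x, c⟩ := b; obtain ⟨x', c'⟩ := b₂
            simp_all
          simp [hb2])

lemma mk_eq_embWord {L : List (𝔞 × Bool)} (h : ∀ b ∈ L, b.2 = true) :
    FreeGroup.mk L = embWord (L.map Prod.fst) := by
  unfold embWord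
  congr 1
  rw [List.map_map]
  have : L.map ((fun a => (a, true)) ∘ Prod.fst) = L := by
    conv_rhs => rw [← List.map_id L]
    apply List.map_congr_left
    intro b hb
    have := h b hb
    simp [Function.comp, ← this]
  rw [this]

lemma toWord_no_cancel (g : FreeGroup 𝔞) :
    ∀ (L₁ : List (𝔞 × Bool)) (x : 𝔞) (b : Bool) (L₂ : List (𝔞 × Bool)),
      g.toWord ≠ L₁ ++ (x, b) :: (x, !b) :: L₂ := by
  intro L₁ x b L₂ h
  have : FreeGroup.reduce g.toWord = g.toWord := FreeGroup.reduce_toWord g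
  rw [h] at this
  exact FreeGroup.reduce.not this

/-- For a two-sided symbolic dynamical system, if `D_g ≠ ∅` then `g` or `g⁻¹`
lies in the positive cone `𝔞*` of the free group. -/
theorem stmt6 (X : Set (ℤ → 𝔞)) (hX : tshift '' X = X)
    (g : FreeGroup 𝔞) (hg : (tD X g).Nonempty) :
    (∃ μ : List 𝔞, g = embWord μ) ∨ (∃ μ : List 𝔞, g⁻¹ = embWord μ) := by
  have hkey := key_lemma X g.toWord (toWord_no_cancel g) hg
  cases hkey with
  | inl h =>
    left
    refine ⟨g.toWord.map Prod.fst, ?_⟩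
    conv_lhs => rw [← FreeGroup.mk_toWord (x := g)]
    exact mk_eq_embWord h
  | inr h =>
    right
    refine ⟨(FreeGroup.invRev g.toWord).map Prod.fst, ?_⟩
    conv_lhs => rw [← FreeGroup.mk_toWord (x := g), FreeGroup.inv_mk]
    apply mk_eq_embWord
    intro b hb
    unfold FreeGroup.invRev at hb
    simp only [List.mem_reverse, List.mem_map] at hb
    obtain ⟨c, hc, rfl⟩ := hb
    simp [h c hc]
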